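/- If f ∈ Ω (i.e., f analytic on D, f(0)=0, f'(0)=1, |z f'(z)-f(z)| < 1/2 on D), then Re(f'(z)) ≥ 1 - |z| for all z ∈ D; consequently f' has positive real part on D and f is close-to-convex. -/

import Mathlib

open Metric Complex Set Filter

theorem stmt_10 (f : ℂ → ℂ)
    (hf : DifferentiableOn ℂ f (ball (0:ℂ) 1))
    (hf0 : f 0 = 0) (hf1 : deriv f 0 = 1)
    (hΩ : ∀ z ∈ ball (0:ℂ) 1, ‖z * deriv f z - f z‖ < 1/2) :
    ∀ z ∈ ball (0:ℂ) 1, 1 - ‖z‖ ≤ (deriv f z).re ∧ 0 < (deriv f z).re := by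
  have hfa : AnalyticOnNhd ℂ f (ball (0:ℂ) 1) := hf.analyticOnNhd isOpen_ball
  have hfa' : AnalyticOnNhd ℂ (deriv f) (ball (0:ℂ) 1) := hfa.deriv
  set h : ℂ → ℂ := fun z => z * deriv f z - f z with hh
  have h0 : (0:ℂ) ∈ ball (0:ℂ) 1 := by simp
  have hhd : DifferentiableOn ℂ h (ball (0:ℂ) 1) := by
    intro z hz
    exact (((differentiableAt_id.mul (hfa' z hz).differentiableAt).sub
      (hfa z hz).differentiableAt).differentiableWithinAt)
  have hh0 : h 0 = 0 := by simp [hh, hf0]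
  -- deriv h 0 = 0
  have hderivh0 : deriv h 0 = 0 := by
    have hd2 : DifferentiableAt ℂ (deriv f) 0 := (hfa' 0 h0).differentiableAt
    have hd1 : DifferentiableAt ℂ f 0 := (hfa 0 h0).differentiableAt
    have H : HasDerivAt h 0 0 := by
      have H' : HasDerivAt (fun z => z * deriv f z - f z)
          (1 * deriv f 0 + 0 * deriv (deriv f) 0 - deriv f 0) 0 :=
        ((hasDerivAt_id' (0:ℂ)).mul hd2.hasDerivAt).sub hd1.hasDerivAt
      exact H'.congr_deriv (by rw [hf1]; ring)
    exact H.deriv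
  -- h maps ball to ball (h 0) (1/2)
  have hmaps : MapsTo h (ball (0:ℂ) 1) (ball (h 0) (1/2)) := by
    intro z hz
    rw [mem_ball, hh0, dist_zero_right]
    exact hΩ z hz
  -- Schwarz: ‖dslope h 0 z‖ ≤ 1/2, strict by equality case
  have hds_le : ∀ z ∈ ball (0:ℂ) 1, ‖dslope h 0 z‖ ≤ 1/2 := by
    intro z hz
    have := Complex.norm_dslope_le_div_of_mapsTo_ball hhd (hmaps.mono_right ball_subset_closedBall) hz
    rwa [div_one] at this
  have hds_lt : ∀ z ∈ ball (0:ℂ) 1, ‖dslope h 0 z‖ < 1/2 := by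
    intro z hz
    rcases lt_or_eq_of_le (hds_le z hz) with hlt | heq
    · exact hlt
    · exfalso
      have heq' : ‖dslope h 0 z‖ = (1/2) / 1 := by rw [heq]; norm_num
      have haff := Complex.affine_of_mapsTo_ball_of_exists_norm_dslope_eq_div
        hhd (hmaps.mono_right ball_subset_closedBall) hz heq'
      have hC : deriv h 0 = dslope h 0 z := by
        have hev : h =ᶠ[nhds 0] (fun w => h 0 + (w - 0) • dslope h 0 z) :=
          Filter.eventuallyEq_of_mem (isOpen_ball.mem_nhds h0) haff
        rw [hev.deriv_eq]
        have hD : HasDerivAt (fun w : ℂ => h 0 + (w - 0) • dslope h 0 z)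
            (dslope h 0 z) 0 := by
          simpa using (((hasDerivAt_id (0:ℂ)).sub_const 0).smul_const
            (dslope h 0 z)).const_add (h 0)
        exact hD.deriv
      rw [hderivh0] at hC
      rw [← hC, norm_zero] at heq
      norm_num at heq
  -- second Schwarz: ‖h z‖ ≤ ‖z‖^2 / 2
  have hd1d : DifferentiableOn ℂ (dslope h 0) (ball (0:ℂ) 1) :=
    (Complex.differentiableOn_dslope (isOpen_ball.mem_nhds h0)).mpr hhd
  have hd10 : dslope h 0 0 = 0 := by rw [dslope_same]; exact hderivh0
  have hmaps2 : MapsTo (dslope h 0) (ball (0:ℂ) 1) (ball (dslope h 0 0) (1/2)) := by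
    intro z hz
    rw [mem_ball, hd10, dist_zero_right]
    exact hds_lt z hz
  have hds2 : ∀ z ∈ ball (0:ℂ) 1, ‖dslope h 0 z‖ ≤ ‖z‖ / 2 := by
    intro z hz
    have := Complex.dist_le_div_mul_dist_of_mapsTo_ball hd1d (hmaps2.mono_right ball_subset_closedBall) hz
    rw [hd10, dist_zero_right, dist_zero_right] at this
    linarith
  have hkey : ∀ z ∈ ball (0:ℂ) 1, ‖h z‖ ≤ ‖z‖ ^ 2 / 2 := by
    intro z hz
    rcases eq_or_ne z 0 with rfl | hz0
    · simp [hh0]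
    · have hzpos : (0:ℝ) < ‖z‖ := norm_pos_iff.mpr hz0
      have h2 := hds2 z hz
      rw [dslope_of_ne _ hz0, slope_def_field, hh0, sub_zero, sub_zero,
        norm_div] at h2
      have h3 := (div_le_iff₀ hzpos).mp h2
      nlinarith
  -- g = dslope f 0
  set g : ℂ → ℂ := dslope f 0 with hg
  have hgd : DifferentiableOn ℂ g (ball (0:ℂ) 1) :=
    (Complex.differentiableOn_dslope (isOpen_ball.mem_nhds h0)).mpr hf
  have hg0 : g 0 = 1 := by rw [hg, dslope_same]; exact hf1
  have hgz : ∀ z : ℂ, z ≠ 0 → g z = f z / z := by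
    intro z hz0
    rw [hg, dslope_of_ne _ hz0, slope_def_field, hf0, sub_zero, sub_zero]
  -- deriv g bound on punctured ball
  have hderivg : ∀ z ∈ ball (0:ℂ) 1, z ≠ 0 → ‖deriv g z‖ ≤ 1/2 := by
    intro z hz hz0
    have hev : g =ᶠ[nhds z] (fun w => f w / w) := by
      have hmem : (ball (0:ℂ) 1 \ {0}) ∈ nhds z :=
        (isOpen_ball.sdiff isClosed_singleton).mem_nhds ⟨hz, hz0⟩
      filter_upwards [hmem] with w hw
      exact hgz w hw.2
    have hdf : DifferentiableAt ℂ f z := (hfa z hz).differentiableAt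
    have hdz : HasDerivAt (fun w => f w / w) ((deriv f z * z - f z * 1) / z ^ 2) z :=
      hdf.hasDerivAt.div (hasDerivAt_id z) hz0
    have hEq : deriv g z = (deriv f z * z - f z) / z ^ 2 := by
      rw [hev.deriv_eq]; simpa using hdz.deriv
    rw [hEq]
    have hzn : (0:ℝ) < ‖z‖ := norm_pos_iff.mpr hz0
    have hnorm : ‖(deriv f z * z - f z) / z ^ 2‖ = ‖h z‖ / ‖z‖ ^ 2 := by
      rw [norm_div, norm_pow]
      congr 2
      rw [hh]; ring_nf
    rw [hnorm, div_le_iff₀ (by positivity)]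
    calc ‖h z‖ ≤ ‖z‖ ^ 2 / 2 := hkey z hz
      _ = 1/2 * ‖z‖ ^ 2 := by ring
  -- deriv g bound everywhere, including 0, by continuity
  have hderivg' : ∀ z ∈ ball (0:ℂ) 1, ‖deriv g z‖ ≤ 1/2 := by
    intro z hz
    rcases eq_or_ne z 0 with rfl | hz0
    · have hcont : ContinuousAt (deriv g) 0 := by
        have hga : AnalyticOnNhd ℂ g (ball (0:ℂ) 1) := hgd.analyticOnNhd isOpen_ball
        exact (hga.deriv 0 h0).continuousAt
      have htend : Tendsto (fun w => ‖deriv g w‖) (nhdsWithin (0:ℂ) {(0:ℂ)}ᶜ)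
          (nhds ‖deriv g 0‖) :=
        (hcont.norm.tendsto).mono_left nhdsWithin_le_nhds
      refine le_of_tendsto htend ?_
      have hmem : ball (0:ℂ) 1 ∈ nhdsWithin (0:ℂ) {(0:ℂ)}ᶜ :=
        nhdsWithin_le_nhds (isOpen_ball.mem_nhds h0)
      filter_upwards [hmem, self_mem_nhdsWithin] with w hw hw0
      exact hderivg w hw hw0
    · exact hderivg z hz hz0
  -- MVT: ‖g z - 1‖ ≤ ‖z‖/2
  have hgbound : ∀ z ∈ ball (0:ℂ) 1, ‖g z - 1‖ ≤ ‖z‖ / 2 := by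
    intro z hz
    have := (convex_ball (0:ℂ) 1).norm_image_sub_le_of_norm_deriv_le
      (fun x hx => (hgd x hx).differentiableAt (isOpen_ball.mem_nhds hx))
      hderivg' h0 hz
    rw [hg0, sub_zero] at this
    linarith
  -- conclude
  intro z hz
  have hz1 : ‖z‖ < 1 := by simpa [mem_ball, dist_eq_norm] using hz
  have hmain : 1 - ‖z‖ ≤ (deriv f z).re := by
    rcases eq_or_ne z 0 with rfl | hz0
    · rw [hf1]
      simp
    · have hzn : (0:ℝ) < ‖z‖ := norm_pos_iff.mpr hz0
      have hsplit : deriv f z = g z + h z / z := by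
        rw [hgz z hz0, hh]
        field_simp
        ring
      rw [hsplit, Complex.add_re]
      have e1 : |(g z - 1).re| ≤ ‖z‖/2 :=
        le_trans (Complex.abs_re_le_norm _) (hgbound z hz)
      have e2 : |(h z / z).re| ≤ ‖z‖/2 := by
        refine le_trans (Complex.abs_re_le_norm _) ?_
        show ‖h z / z‖ ≤ ‖z‖ / 2
        rw [norm_div, div_le_iff₀ hzn]
        calc ‖h z‖ ≤ ‖z‖^2/2 := hkey z hz
          _ = ‖z‖/2 * ‖z‖ := by ring
      obtain ⟨l1, r1⟩ := abs_le.mp e1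
      obtain ⟨l2, r2⟩ := abs_le.mp e2
      have e3 : (g z - 1).re = (g z).re - 1 := by simp
      linarith
  exact ⟨hmain, lt_of_lt_of_le (by linarith) hmain⟩
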